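/- If G = (X, <>, ⊏) is a gso-structure, then G equals its ⋈-closure: the ⋈-closure of (X, <>, ⊏) is (X, <>, ⊏). -/

import Mathlib

/-- A stratified order on `X`: an irreflexive, transitive relation such that the
relation `a ≃ b ↔ a = b ∨ (¬ r a b ∧ ¬ r b a)` is transitive. -/
def IsStratOrder {X : Type*} (r : X → X → Prop) : Prop :=
  (∀ a, ¬ r a a) ∧ (∀ a b c, r a b → r b c → r a c) ∧
  (∀ a b c, (a = b ∨ (¬ r a b ∧ ¬ r b a)) → (b = c ∨ (¬ r b c ∧ ¬ r c b)) →
    (a = c ∨ (¬ r a c ∧ ¬ r c a)))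

/-- A stratified order structure `(X, ≺, ⊏)`: axioms S1–S4. -/
def IsSOStruct {X : Type*} (prec sub : X → X → Prop) : Prop :=
  (∀ a, ¬ sub a a) ∧
  (∀ a b, prec a b → sub a b) ∧
  (∀ a b c, sub a b → sub b c → a ≠ c → sub a c) ∧
  (∀ a b c, (sub a b ∧ prec b c) ∨ (prec a b ∧ sub b c) → prec a c)

/-- A generalized stratified order structure `(X, cross, sub)`: `sub` is irreflexive,
`cross` is irreflexive and symmetric, and `(X, cross ∩ sub, sub)` is a so-structure. -/
def IsGSOStruct {X : Type*} (cross sub : X → X → Prop) : Prop :=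
  (∀ a, ¬ sub a a) ∧ (∀ a, ¬ cross a a) ∧ (∀ a b, cross a b → cross b a) ∧
  IsSOStruct (fun a b => cross a b ∧ sub a b) sub

/-- The symmetric closure of a relation. -/
def symcl {X : Type*} (r : X → X → Prop) (a b : X) : Prop := r a b ∨ r b a

/-- The `≺` component of the ◊-closure of `(X, R₁, R₂)`:
`(R₁ ∪ R₂)* ∘ R₁ ∘ (R₁ ∪ R₂)*`. -/
def diamondPrec {X : Type*} (R1 R2 : X → X → Prop) (a b : X) : Prop :=
  ∃ c d : X, Relation.ReflTransGen (fun x y => R1 x y ∨ R2 x y) a c ∧ R1 c d ∧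
    Relation.ReflTransGen (fun x y => R1 x y ∨ R2 x y) d b

/-- The `⊏` component of the ◊-closure of `(X, R₁, R₂)`: `(R₁ ∪ R₂)* \ id`. -/
def diamondSub {X : Type*} (R1 R2 : X → X → Prop) (a b : X) : Prop :=
  Relation.ReflTransGen (fun x y => R1 x y ∨ R2 x y) a b ∧ a ≠ b

/-- `R₃ = R₁ ∩ R₂*` in the definition of the ⋈-closure. -/
def bowtieR3 {X : Type*} (R1 R2 : X → X → Prop) (a b : X) : Prop :=
  R1 a b ∧ Relation.ReflTransGen R2 a b

/-- Every gso-structure is a fixed point of the ⋈-closure: the ⋈-closure of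
`(X, cross, sub)` is `(X, cross, sub)` itself. -/
theorem stmt17 {X : Type*} (cross sub : X → X → Prop)
    (hG : IsGSOStruct cross sub) :
    (∀ a b : X,
      (symcl (diamondPrec (bowtieR3 cross sub) sub) a b ∨ cross a b) ↔ cross a b) ∧
    (∀ a b : X, diamondSub (bowtieR3 cross sub) sub a b ↔ sub a b) := by

  obtain ⟨hsubirr, hcrossirr, hcrosssym, hS1, hS2, hS3, hS4⟩ := hG
  have hsubstar : ∀ a b : X, Relation.ReflTransGen sub a b → a = b ∨ sub a b := by
    intro a b h
    induction h with
    | refl => exact Or.inl rfl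
    | @tail c b hac hcb ih =>
      rcases ih with rfl | h1
      · exact Or.inr hcb
      · rcases eq_or_ne a b with rfl | hne
        · exact Or.inl rfl
        · exact Or.inr (hS3 a c b h1 hcb hne)
  have hR3 : ∀ a b : X, bowtieR3 cross sub a b → cross a b ∧ sub a b := by
    intro a b ⟨hc, hs⟩
    rcases hsubstar a b hs with rfl | h
    · exact absurd hc (hcrossirr a)
    · exact ⟨hc, h⟩
  have hchain : ∀ a b : X,
      Relation.ReflTransGen (fun x y => bowtieR3 cross sub x y ∨ sub x y) a b →
      Relation.ReflTransGen sub a b := by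
    intro a b h
    refine Relation.ReflTransGen.mono ?_ _ _ h
    intro x y hxy
    rcases hxy with h | h
    · exact (hR3 x y h).2
    · exact h
  have hprec : ∀ a b : X, diamondPrec (bowtieR3 cross sub) sub a b → cross a b := by
    intro a b ⟨c, d, hac, hcd, hdb⟩
    have hcd' := hR3 c d hcd
    have had : cross a d ∧ sub a d := by
      rcases hsubstar a c (hchain a c hac) with rfl | h
      · exact hcd'
      · exact hS4 a c d (Or.inl ⟨h, hcd'⟩)
    have hab : cross a b ∧ sub a b := by
      rcases hsubstar d b (hchain d b hdb) with rfl | h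
      · exact had
      · exact hS4 a d b (Or.inr ⟨had, h⟩)
    exact hab.1
  constructor
  · intro a b
    constructor
    · intro h
      rcases h with (h | h) | h
      · exact hprec a b h
      · exact hcrosssym b a (hprec b a h)
      · exact h
    · exact fun h => Or.inr h
  · intro a b
    constructor
    · intro ⟨h, hne⟩
      rcases hsubstar a b (hchain a b h) with rfl | h'
      · exact absurd rfl hne
      · exact h'
    · intro h
      refine ⟨Relation.ReflTransGen.single (Or.inr h), ?_⟩
      rintro rfl
      exact hsubirr a h
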